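/- (Lemma 1, amplitude form) Let N ≥ 1, let E : Fin N → Fin N → Prop, C : Fin N → Fin N → Bool, and T : Fin N → Fin N → ℂ with T a j ≠ 0 ↔ E a j, and let Ψ be the postselected coefficient function. If there are j : Fin N and c : Bool such that every maximally matchable edge (a, j) of E satisfies C a j = c, then Ψ s = 0 for every s : Fin N → Bool with s j ≠ c; i.e., the subsystem at detector j is separable from the rest in the computational basis, taking the definite value c. -/

import Mathlib

open scoped Classical

/-- The postselected (bosonic) coefficient function of an LQN:
`Ψ s = Σ_{σ PM of E with outcome string s} Π_a T a (σ a)`. -/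
noncomputable def lqnPsi {V : Type*} [Fintype V] [DecidableEq V]
    (E : V → V → Prop) (C : V → V → Bool) (T : V → V → ℂ)
    (s : V → Bool) : ℂ :=
  ∑ σ ∈ Finset.univ.filter (fun σ : Equiv.Perm V =>
      (∀ a, E a (σ a)) ∧ ∀ j, C (σ⁻¹ j) j = s j),
    ∏ a, T a (σ a)

/-- Lemma 1, amplitude form: If every maximally matchable edge `(a, j)`
has color `c`, then the postselected coefficient function vanishes on every string `s`
with `s j ≠ c`: the subsystem at detector `j` takes the definite value `c`. -/
theorem lqn_lemma1_amplitude (N : ℕ) (hN : 1 ≤ N)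
    (E : Fin N → Fin N → Prop) (C : Fin N → Fin N → Bool)
    (T : Fin N → Fin N → ℂ) (hT : ∀ a j, T a j ≠ 0 ↔ E a j)
    (j : Fin N) (c : Bool)
    (h : ∀ a : Fin N,
      (∃ σ : Equiv.Perm (Fin N), (∀ b, E b (σ b)) ∧ σ a = j) → C a j = c) :
    ∀ s : Fin N → Bool, s j ≠ c → lqnPsi E C T s = 0 := by
  intro s hs
  unfold lqnPsi
  apply Finset.sum_eq_zero
  intro σ hσ
  simp only [Finset.mem_filter, Finset.mem_univ, true_and] at hσ
  exfalso
  apply hs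
  rw [← hσ.2 j]
  exact h (σ⁻¹ j) ⟨σ, hσ.1, σ.apply_symm_apply j⟩
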